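/- Let F be a real inner product space, U ⊆ F open, and ρ : F → ℝ twice continuously differentiable on U (ContDiffOn ℝ 2 ρ U) with ‖∇ρ(z)‖ = 1 for all z ∈ U, where ∇ρ denotes the gradient with respect to the inner product. Let z₀ ∈ U and t ∈ ℝ be such that z₀ + s·∇ρ(z₀) ∈ U for all s between 0 and t. Then ∇ρ(z₀ + t·∇ρ(z₀)) = ∇ρ(z₀) and ρ(z₀ + t·∇ρ(z₀)) = ρ(z₀) + t. -/

import Mathlib

/-!
STATEMENT 7: eikonal equation ‖∇ρ‖ ≡ 1 on an open set U implies that along the normal line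
the gradient is constant and ρ grows linearly: ∇ρ(z₀ + t·∇ρ(z₀)) = ∇ρ(z₀) and
ρ(z₀ + t·∇ρ(z₀)) = ρ(z₀) + t, provided the segment stays in U.
-/

open Set

section EikonalAux

open InnerProductSpace

variable {F : Type*} [NormedAddCommGroup F] [InnerProductSpace ℝ F] [CompleteSpace F]

local notation "⟪" x ", " y "⟫" => @inner ℝ _ _ x y

theorem eikonal_key {U : Set F} (hU : IsOpen U) (ρ : F → ℝ) (hρ : ContDiffOn ℝ 2 ρ U)
    (hgrad : ∀ z ∈ U, ‖gradient ρ z‖ = 1) {z : F} (hz : z ∈ U) :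
    fderiv ℝ (gradient ρ) z (gradient ρ z) = 0 := by
  set e : StrongDual ℝ F ≃L[ℝ] F := (toDual ℝ F).symm.toContinuousLinearEquiv with he
  have hge : gradient ρ = ⇑e ∘ fderiv ℝ ρ := rfl
  have hcomp : fderiv ℝ (gradient ρ) z
      = (e : StrongDual ℝ F →L[ℝ] F).comp (fderiv ℝ (fderiv ℝ ρ) z) := by
    rw [hge]; exact e.comp_fderiv
  have hdual : ∀ w u : F, ⟪fderiv ℝ (gradient ρ) z w, u⟫ = fderiv ℝ (fderiv ℝ ρ) z w u := by
    intro w u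
    rw [hcomp]
    exact toDual_symm_apply
  have hρz : ContDiffAt ℝ 2 ρ z := hρ.contDiffAt (hU.mem_nhds hz)
  have hsymm : IsSymmSndFDerivAt ℝ ρ z := hρz.isSymmSndFDerivAt (by simp)
  -- gradient is C¹ on U hence differentiable at z
  have hg1 : ContDiffOn ℝ 1 (gradient ρ) U := by
    have hfd : ContDiffOn ℝ 1 (fderiv ℝ ρ) U := hρ.fderiv_of_isOpen hU (by norm_num)
    exact ((e : StrongDual ℝ F →L[ℝ] F).contDiff).comp_contDiffOn hfd
  have hdg : DifferentiableAt ℝ (gradient ρ) z :=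
    (hg1.contDiffAt (hU.mem_nhds hz)).differentiableAt one_ne_zero
  -- differentiate the eikonal equation
  have hperp : ∀ w : F, ⟪fderiv ℝ (gradient ρ) z w, gradient ρ z⟫ = 0 := by
    intro w
    have hq : HasFDerivAt (fun y => ⟪gradient ρ y, gradient ρ y⟫)
        ((fderivInnerCLM ℝ (gradient ρ z, gradient ρ z)).comp
          ((fderiv ℝ (gradient ρ) z).prod (fderiv ℝ (gradient ρ) z))) z :=
      hdg.hasFDerivAt.inner ℝ hdg.hasFDerivAt
    have heq : (fun y => ⟪gradient ρ y, gradient ρ y⟫) =ᶠ[nhds z] fun _ => (1 : ℝ) := by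
      filter_upwards [hU.mem_nhds hz] with y hy
      rw [real_inner_self_eq_norm_sq, hgrad y hy]; norm_num
    have h0 : fderiv ℝ (fun y => ⟪gradient ρ y, gradient ρ y⟫) z = 0 := by
      rw [heq.fderiv_eq]; exact fderiv_const_apply 1
    have := hq.fderiv
    rw [h0] at this
    have h2 := congrArg (fun L => L w) this.symm
    simp only [ContinuousLinearMap.comp_apply, ContinuousLinearMap.prod_apply,
      fderivInnerCLM_apply, ContinuousLinearMap.zero_apply] at h2
    have h3 : ⟪gradient ρ z, fderiv ℝ (gradient ρ) z w⟫
        = ⟪fderiv ℝ (gradient ρ) z w, gradient ρ z⟫ := real_inner_comm _ _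
    linarith [h2, h3.symm ▸ h2]
  -- use symmetry
  have : ⟪fderiv ℝ (gradient ρ) z (gradient ρ z), fderiv ℝ (gradient ρ) z (gradient ρ z)⟫ = 0 := by
    rw [hdual, hsymm.eq, ← hdual, hperp]
  exact inner_self_eq_zero.mp this

theorem eikonal_aux {U : Set F} (hU : IsOpen U) (ρ : F → ℝ) (hρ : ContDiffOn ℝ 2 ρ U)
    (hgrad : ∀ z ∈ U, ‖gradient ρ z‖ = 1)
    (z₀ : F) (hz₀ : z₀ ∈ U) (t : ℝ) (ht : 0 ≤ t)
    (hseg : ∀ s ∈ Set.Icc (0 : ℝ) t, z₀ + s • gradient ρ z₀ ∈ U) :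
    (∀ s ∈ Set.Icc (0 : ℝ) t, gradient ρ (z₀ + s • gradient ρ z₀) = gradient ρ z₀) ∧
      ρ (z₀ + t • gradient ρ z₀) = ρ z₀ + t := by
  set e : StrongDual ℝ F ≃L[ℝ] F := (toDual ℝ F).symm.toContinuousLinearEquiv with he
  set v : F := gradient ρ z₀ with hv
  set γ : ℝ → F := fun s => z₀ + s • v with hγ
  have hγc : Continuous γ := by fun_prop
  have hγd : ∀ s : ℝ, HasDerivAt γ v s := by
    intro s
    have h := ((hasDerivAt_id s).smul_const v).const_add z₀
    rw [one_smul] at h; exact h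
  have hg1 : ContDiffOn ℝ 1 (gradient ρ) U := by
    have hfd : ContDiffOn ℝ 1 (fderiv ℝ ρ) U := hρ.fderiv_of_isOpen hU (by norm_num)
    exact ((e : StrongDual ℝ F →L[ℝ] F).contDiff).comp_contDiffOn hfd
  have hdg : ∀ z ∈ U, DifferentiableAt ℝ (gradient ρ) z := fun z hz =>
    (hg1.contDiffAt (hU.mem_nhds hz)).differentiableAt one_ne_zero
  -- bound on the Hessian along the segment
  have hcontD : ContinuousOn (fun s => fderiv ℝ (gradient ρ) (γ s)) (Icc 0 t) := by
    have h1 : ContinuousOn (fderiv ℝ (gradient ρ)) U :=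
      hg1.continuousOn_fderiv_of_isOpen hU le_rfl
    exact h1.comp hγc.continuousOn hseg
  obtain ⟨M, hM⟩ := isCompact_Icc.exists_bound_of_continuousOn hcontD
  -- Gronwall
  have hNconst : ∀ s ∈ Icc (0 : ℝ) t, gradient ρ (γ s) = v := by
    have hf' : ∀ s ∈ Ico (0 : ℝ) t,
        HasDerivWithinAt (fun s => gradient ρ (γ s) - v)
          (fderiv ℝ (gradient ρ) (γ s) v) (Ici s) s := by
      intro s hs
      have := ((hdg _ (hseg s (mem_Icc_of_Ico hs))).hasFDerivAt.comp_hasDerivAt s (hγd s)).sub_const v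
      exact this.hasDerivWithinAt
    have hcont : ContinuousOn (fun s => gradient ρ (γ s) - v) (Icc 0 t) :=
      ((hg1.continuousOn.comp hγc.continuousOn hseg).sub continuousOn_const)
    have hbound : ∀ s ∈ Ico (0 : ℝ) t,
        ‖fderiv ℝ (gradient ρ) (γ s) v‖ ≤ M * ‖gradient ρ (γ s) - v‖ + 0 := by
      intro s hs
      have hsU : γ s ∈ U := hseg s (mem_Icc_of_Ico hs)
      have hkey : fderiv ℝ (gradient ρ) (γ s) (gradient ρ (γ s)) = 0 :=
        eikonal_key hU ρ hρ hgrad hsU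
      have : fderiv ℝ (gradient ρ) (γ s) v
          = -(fderiv ℝ (gradient ρ) (γ s) (gradient ρ (γ s) - v)) := by
        rw [map_sub, hkey]; abel
      rw [this, norm_neg, add_zero]
      calc ‖fderiv ℝ (gradient ρ) (γ s) (gradient ρ (γ s) - v)‖
          ≤ ‖fderiv ℝ (gradient ρ) (γ s)‖ * ‖gradient ρ (γ s) - v‖ :=
            ContinuousLinearMap.le_opNorm _ _
        _ ≤ M * ‖gradient ρ (γ s) - v‖ :=
            mul_le_mul_of_nonneg_right (hM s (mem_Icc_of_Ico hs)) (norm_nonneg _)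
    have h0 : ‖gradient ρ (γ 0) - v‖ ≤ 0 := by
      simp [hγ, hv]
    have := norm_le_gronwallBound_of_norm_deriv_right_le hcont hf' h0 hbound
    intro s hs
    have h1 := this s hs
    rw [sub_zero, gronwallBound_ε0_δ0] at h1
    have : gradient ρ (γ s) - v = 0 := by
      rw [← norm_le_zero_iff]; exact h1
    exact sub_eq_zero.mp this
  refine ⟨hNconst, ?_⟩
  -- the function ρ∘γ - s has zero right derivative
  have hψ : ∀ s ∈ Icc (0 : ℝ) t, ρ (γ s) - s = ρ (γ 0) - 0 := by
    apply constant_of_has_deriv_right_zero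
    · have hρc : ContinuousOn ρ U := hρ.continuousOn
      exact (hρc.comp hγc.continuousOn hseg).sub (continuousOn_id' _)
    · intro s hs
      have hsU : γ s ∈ U := hseg s (mem_Icc_of_Ico hs)
      have hρd : DifferentiableAt ℝ ρ (γ s) :=
        (hρ.contDiffAt (hU.mem_nhds hsU)).differentiableAt (by norm_num)
      have h1 : HasDerivAt (fun s => ρ (γ s)) (fderiv ℝ ρ (γ s) v) s :=
        hρd.hasFDerivAt.comp_hasDerivAt s (hγd s)
      have h2 : fderiv ℝ ρ (γ s) v = 1 := by
        have h3 : ⟪gradient ρ (γ s), v⟫ = fderiv ℝ ρ (γ s) v := toDual_symm_apply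
        rw [← h3, hNconst s (mem_Icc_of_Ico hs), real_inner_self_eq_norm_sq, hv, hgrad z₀ hz₀]
        norm_num
      have h4 : HasDerivAt (fun s => ρ (γ s) - s) 0 s := by
        have h := h1.sub (hasDerivAt_id' s)
        rw [h2, sub_self] at h; exact h
      exact h4.hasDerivWithinAt
  have := hψ t (right_mem_Icc.mpr ht)
  simp only [hγ, zero_smul, add_zero] at this
  linarith

end EikonalAux

theorem eikonal_gradient_constant_along_normal
    {F : Type*} [NormedAddCommGroup F] [InnerProductSpace ℝ F] [CompleteSpace F]
    {U : Set F} (hU : IsOpen U) (ρ : F → ℝ) (hρ : ContDiffOn ℝ 2 ρ U)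
    (hgrad : ∀ z ∈ U, ‖gradient ρ z‖ = 1)
    (z₀ : F) (hz₀ : z₀ ∈ U) (t : ℝ)
    (hseg : ∀ s ∈ Set.uIcc (0 : ℝ) t, z₀ + s • gradient ρ z₀ ∈ U) :
    gradient ρ (z₀ + t • gradient ρ z₀) = gradient ρ z₀ ∧
      ρ (z₀ + t • gradient ρ z₀) = ρ z₀ + t := by
  rcases le_or_gt 0 t with ht | ht
  · have huIcc : Set.uIcc (0 : ℝ) t = Set.Icc 0 t := uIcc_of_le ht
    rw [huIcc] at hseg
    obtain ⟨h1, h2⟩ := eikonal_aux hU ρ hρ hgrad z₀ hz₀ t ht hseg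
    exact ⟨h1 t (right_mem_Icc.mpr ht), h2⟩
  · -- apply to -ρ with time -t
    have hneg : ∀ z : F, gradient (fun x => -ρ x) z = -gradient ρ z := by
      intro z; unfold gradient; rw [show (fun x => -ρ x) = -ρ from rfl, fderiv_neg, map_neg]
    have huIcc : Set.uIcc (0 : ℝ) t = Set.Icc t 0 := uIcc_of_ge ht.le
    rw [huIcc] at hseg
    have hseg' : ∀ s ∈ Set.Icc (0 : ℝ) (-t),
        z₀ + s • gradient (fun x => -ρ x) z₀ ∈ U := by
      intro s hs
      rw [hneg]
      have : z₀ + s • -gradient ρ z₀ = z₀ + (-s) • gradient ρ z₀ := by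
        rw [neg_smul, smul_neg]
      rw [this]
      exact hseg (-s) ⟨by linarith [hs.2], by linarith [hs.1]⟩
    have hgrad' : ∀ z ∈ U, ‖gradient (fun x => -ρ x) z‖ = 1 := by
      intro z hz; rw [hneg, norm_neg]; exact hgrad z hz
    obtain ⟨h1, h2⟩ := eikonal_aux hU (fun x => -ρ x) hρ.neg hgrad' z₀ hz₀ (-t)
      (by linarith) hseg'
    have hpt : z₀ + (-t) • gradient (fun x => -ρ x) z₀ = z₀ + t • gradient ρ z₀ := by
      rw [hneg, smul_neg, neg_smul, neg_neg]
    have h1' := h1 (-t) (right_mem_Icc.mpr (by linarith))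
    rw [hpt, hneg, hneg] at h1'
    constructor
    · exact neg_injective h1'
    · rw [hpt] at h2
      linarith
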